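/- Let g ≥ 1 and let V = 𝔽₂^{4g+2} with basis a_1, b_1, …, a_{2g+1}, b_{2g+1}. Define B_{2i-1} = (a_i + a_{i+1} + ⋯ + a_{2g+2-i}) + b_i + b_{2g+2-i} and B_{2i} = B_{2i-1} + a_i + a_{2g+2-i} for 1 ≤ i ≤ g, and set e_i = a_i + a_{g+1}, f_i = b_i + b_{g+1}. Then any set ℬ consisting of B_1, …, B_{2g}, a_{g+1}, b_{g+1}, together with, for each 1 ≤ i ≤ g, one element of {a_i, e_i} and one element of {b_i, f_i}, is a basis of V. -/

import Mathlib

/-- Lemma 3.3 (linear algebra content): in an 𝔽₂-vector space with basis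
a_1, b_1, …, a_{2g+1}, b_{2g+1}, with B_{2i-1}, B_{2i}, e_i, f_i as defined,
any set consisting of B_1, …, B_{2g}, a_{g+1}, b_{g+1} together with, for each
1 ≤ i ≤ g, one of {a_i, e_i} and one of {b_i, f_i}, is a basis. -/
theorem stmt_11 (g : ℕ) (hg : 1 ≤ g) {V : Type*} [AddCommGroup V]
    [Module (ZMod 2) V] (a b : ℕ → V)
    (hindep : LinearIndependent (ZMod 2)
      (Sum.elim (fun i : Fin (2*g+1) => a ((i : ℕ)+1))
                (fun i : Fin (2*g+1) => b ((i : ℕ)+1))))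
    (hspan : Submodule.span (ZMod 2)
      (Set.range (Sum.elim (fun i : Fin (2*g+1) => a ((i : ℕ)+1))
                           (fun i : Fin (2*g+1) => b ((i : ℕ)+1)))) = ⊤)
    (BB : ℕ → V)
    (hBBodd : ∀ i, 1 ≤ i → i ≤ g →
      BB (2*i-1) = (∑ j ∈ Finset.Icc i (2*g+2-i), a j) + b i + b (2*g+2-i))
    (hBBeven : ∀ i, 1 ≤ i → i ≤ g →
      BB (2*i) = BB (2*i-1) + a i + a (2*g+2-i))
    (sa sb : ℕ → Bool) :
    let e : ℕ → V := fun i => a i + a (g+1)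
    let f : ℕ → V := fun i => b i + b (g+1)
    let F : Fin (2*g) ⊕ Fin 2 ⊕ Fin g ⊕ Fin g → V :=
      Sum.elim (fun j : Fin (2*g) => BB ((j : ℕ)+1))
        (Sum.elim (fun j : Fin 2 => if j = 0 then a (g+1) else b (g+1))
          (Sum.elim (fun i : Fin g => if sa ((i : ℕ)+1) then a ((i : ℕ)+1) else e ((i : ℕ)+1))
            (fun i : Fin g => if sb ((i : ℕ)+1) then b ((i : ℕ)+1) else f ((i : ℕ)+1))))
    LinearIndependent (ZMod 2) F ∧
      Submodule.span (ZMod 2) (Set.range F) = ⊤ := by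
  intro e f F
  set S := Submodule.span (ZMod 2) (Set.range F) with hSdef
  have hmem : ∀ x, F x ∈ S := fun x => Submodule.subset_span ⟨x, rfl⟩
  have hag1 : a (g+1) ∈ S := by simpa [F] using hmem (Sum.inr (Sum.inl 0))
  have hbg1 : b (g+1) ∈ S := by simpa [F] using hmem (Sum.inr (Sum.inl 1))
  have hAlow : ∀ i, 1 ≤ i → i ≤ g → a i ∈ S := by
    intro i h1 h2
    have h := hmem (Sum.inr (Sum.inr (Sum.inl ⟨i-1, by omega⟩)))
    simp only [F, Sum.elim_inr, Sum.elim_inl] at h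
    rw [show i - 1 + 1 = i from by omega] at h
    by_cases hsa : sa i = true
    · simpa [hsa] using h
    · simp only [hsa, if_false, e] at h
      simpa using S.sub_mem h hag1
  have hBlow : ∀ i, 1 ≤ i → i ≤ g → b i ∈ S := by
    intro i h1 h2
    have h := hmem (Sum.inr (Sum.inr (Sum.inr ⟨i-1, by omega⟩)))
    simp only [F, Sum.elim_inr] at h
    rw [show i - 1 + 1 = i from by omega] at h
    by_cases hsb : sb i = true
    · simpa [hsb] using h
    · simp only [hsb, if_false, f] at h
      simpa using S.sub_mem h hbg1
  have hBB1 : ∀ i, 1 ≤ i → i ≤ g → BB (2*i-1) ∈ S := by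
    intro i h1 h2
    have h := hmem (Sum.inl ⟨2*i-2, by omega⟩)
    simp only [F, Sum.elim_inl] at h
    rwa [show 2*i - 2 + 1 = 2*i - 1 from by omega] at h
  have hBB2 : ∀ i, 1 ≤ i → i ≤ g → BB (2*i) ∈ S := by
    intro i h1 h2
    have h := hmem (Sum.inl ⟨2*i-1, by omega⟩)
    simp only [F, Sum.elim_inl] at h
    rwa [show 2*i - 1 + 1 = 2*i from by omega] at h
  have hAhigh : ∀ i, 1 ≤ i → i ≤ g → a (2*g+2-i) ∈ S := by
    intro i h1 h2
    have heq : a (2*g+2-i) = BB (2*i) - BB (2*i-1) - a i := by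
      rw [hBBeven i h1 h2]; abel
    rw [heq]
    exact S.sub_mem (S.sub_mem (hBB2 i h1 h2) (hBB1 i h1 h2)) (hAlow i h1 h2)
  have hA : ∀ j, 1 ≤ j → j ≤ 2*g+1 → a j ∈ S := by
    intro j h1 h2
    rcases lt_trichotomy j (g+1) with h | h | h
    · exact hAlow j h1 (by omega)
    · rw [h]; exact hag1
    · rw [show j = 2*g+2-(2*g+2-j) from by omega]
      exact hAhigh _ (by omega) (by omega)
  have hBhigh : ∀ i, 1 ≤ i → i ≤ g → b (2*g+2-i) ∈ S := by
    intro i h1 h2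
    have heq : b (2*g+2-i) = BB (2*i-1) - (∑ j ∈ Finset.Icc i (2*g+2-i), a j) - b i := by
      rw [hBBodd i h1 h2]; abel
    rw [heq]
    refine S.sub_mem (S.sub_mem (hBB1 i h1 h2) (Submodule.sum_mem _ ?_)) (hBlow i h1 h2)
    intro j hj
    rw [Finset.mem_Icc] at hj
    exact hA j (by omega) (by omega)
  have hB : ∀ j, 1 ≤ j → j ≤ 2*g+1 → b j ∈ S := by
    intro j h1 h2
    rcases lt_trichotomy j (g+1) with h | h | h
    · exact hBlow j h1 (by omega)
    · rw [h]; exact hbg1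
    · rw [show j = 2*g+2-(2*g+2-j) from by omega]
      exact hBhigh _ (by omega) (by omega)
  have hspanF : S = ⊤ := by
    rw [eq_top_iff, ← hspan, Submodule.span_le]
    rintro x ⟨i | i, rfl⟩
    · have hi := i.2
      exact hA _ (by omega) (by omega)
    · have hi := i.2
      exact hB _ (by omega) (by omega)
  have bOld : Module.Basis (Fin (2*g+1) ⊕ Fin (2*g+1)) (ZMod 2) V := Module.Basis.mk hindep hspan.ge
  have hrank : Module.finrank (ZMod 2) V = 4*g+2 := by
    rw [Module.finrank_eq_card_basis bOld]
    simp [Fintype.card_sum]; omega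
  have hcard : Fintype.card (Fin (2*g) ⊕ Fin 2 ⊕ Fin g ⊕ Fin g) = 4*g+2 := by
    simp [Fintype.card_sum]; omega
  exact ⟨linearIndependent_of_top_le_span_of_card_eq_finrank hspanF.ge
    (by rw [hcard, hrank]), hspanF⟩
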